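/- Let ℓ ∈ ℕ and define f_ℓ : ℝ³ → ℂ by f_ℓ(n) = ((n₁ − i n₂)/2)^ℓ, and let L₊ = (n₁ + i n₂) ∂/∂n₃ − n₃(∂/∂n₁ + i ∂/∂n₂). Then for every unit vector n ∈ S² and every ζ ∈ ℂ with ζ ≠ 0, (−n(ζ)/ζ²)^ℓ = Σ_{k=0}^{2ℓ} (1/(k! ζ^k)) (L₊^k f_ℓ)(n), and moreover L₊^k f_ℓ vanishes identically on S² for k > 2ℓ. -/

import Mathlib

/-- `n(ζ) = (1/2)(n₁ + i n₂) + ζ n₃ − (1/2)(n₁ − i n₂) ζ²` as a function of `n ∈ ℝ³`. -/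
noncomputable def xz (ζ : ℂ) (n : Fin 3 → ℝ) : ℂ :=
  (1 / 2 : ℂ) * ((n 0 : ℂ) + Complex.I * (n 1 : ℂ)) + ζ * (n 2 : ℂ)
    - (1 / 2 : ℂ) * ((n 0 : ℂ) - Complex.I * (n 1 : ℂ)) * ζ ^ 2

/-- Partial derivative `∂f/∂n_j` of a complex-valued function on `ℝ³`. -/
noncomputable def pd (j : Fin 3) (f : (Fin 3 → ℝ) → ℂ) (x : Fin 3 → ℝ) : ℂ :=
  fderiv ℝ f x (Pi.single j 1)

/-- `L₊ = (n₁ + i n₂) ∂/∂n₃ − n₃(∂/∂n₁ + i ∂/∂n₂)` as an operator on functions. -/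
noncomputable def Lp (f : (Fin 3 → ℝ) → ℂ) : (Fin 3 → ℝ) → ℂ := fun x =>
  ((x 0 : ℂ) + Complex.I * (x 1 : ℂ)) * pd 2 f x
    - (x 2 : ℂ) * (pd 0 f x + Complex.I * pd 1 f x)

/-- `f_ℓ(n) = ((n₁ − i n₂)/2)^ℓ`. -/
noncomputable def fl (ℓ : ℕ) : (Fin 3 → ℝ) → ℂ := fun n =>
  ((((n 0 : ℂ) - Complex.I * (n 1 : ℂ))) / 2) ^ ℓ

open Finset

noncomputable section AuxLp

namespace AuxLp

def wc (n : Fin 3 → ℝ) : ℂ := ((n 0 : ℂ) - Complex.I * (n 1 : ℂ)) / 2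
def uc (n : Fin 3 → ℝ) : ℂ := ((n 0 : ℂ) + Complex.I * (n 1 : ℂ)) / 2
def zc (n : Fin 3 → ℝ) : ℂ := (n 2 : ℂ)

def cR (j : Fin 3) : (Fin 3 → ℝ) →L[ℝ] ℂ :=
  Complex.ofRealCLM.comp (ContinuousLinearMap.proj j)

lemma cR_apply (j : Fin 3) (v : Fin 3 → ℝ) : cR j v = (v j : ℂ) := rfl

lemma hasFDerivAt_coord (j : Fin 3) (x : Fin 3 → ℝ) :
    HasFDerivAt (fun n : Fin 3 → ℝ => ((n j : ℝ) : ℂ)) (cR j) x :=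
  (cR j).hasFDerivAt

lemma hasFDerivAt_wc (x : Fin 3 → ℝ) :
    HasFDerivAt wc ((2⁻¹ : ℂ) • (cR 0 - Complex.I • cR 1)) x := by
  have h := (((hasFDerivAt_coord 0 x).sub ((hasFDerivAt_coord 1 x).const_mul Complex.I)).const_mul
    (2⁻¹ : ℂ))
  have e : wc = fun n : Fin 3 → ℝ => (2⁻¹ : ℂ) * (((n 0 : ℝ) : ℂ) - Complex.I * ((n 1 : ℝ) : ℂ)) := by
    funext n; simp [wc, div_eq_inv_mul]
  rw [e]
  exact h

lemma hasFDerivAt_uc (x : Fin 3 → ℝ) :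
    HasFDerivAt uc ((2⁻¹ : ℂ) • (cR 0 + Complex.I • cR 1)) x := by
  have h := (((hasFDerivAt_coord 0 x).add ((hasFDerivAt_coord 1 x).const_mul Complex.I)).const_mul
    (2⁻¹ : ℂ))
  have e : uc = fun n : Fin 3 → ℝ => (2⁻¹ : ℂ) * (((n 0 : ℝ) : ℂ) + Complex.I * ((n 1 : ℝ) : ℂ)) := by
    funext n; simp [uc, div_eq_inv_mul]
  rw [e]
  exact h

lemma hasFDerivAt_zc (x : Fin 3 → ℝ) : HasFDerivAt zc (cR 2) x := hasFDerivAt_coord 2 x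

lemma hasFDerivAt_npow {E : Type*} [NormedAddCommGroup E] [NormedSpace ℝ E]
    {f : E → ℂ} {f' : E →L[ℝ] ℂ} {x : E} (h : HasFDerivAt f f' x) (m : ℕ) :
    HasFDerivAt (fun y => f y ^ m) (((m : ℂ) * f x ^ (m - 1)) • f') x := by
  induction m with
  | zero =>
    have h0 : HasFDerivAt (fun y : E => f y ^ 0) (0 : E →L[ℝ] ℂ) x := by
      simpa using hasFDerivAt_const (1 : ℂ) x
    convert h0 using 1
    ext v
    simp
  | succ m ih =>
    have h2 : HasFDerivAt (fun y => f y ^ m * f y)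
        ((f x ^ m) • f' + (f x) • (((m : ℂ) * f x ^ (m - 1)) • f')) x := ih.mul h
    have e : (fun y => f y ^ m * f y) = fun y => f y ^ (m + 1) := by
      funext y; rw [pow_succ]
    rw [e] at h2
    convert h2 using 1
    ext v
    simp only [ContinuousLinearMap.add_apply, ContinuousLinearMap.smul_apply, smul_eq_mul]
    cases m with
    | zero => simp
    | succ m =>
      push_cast
      ring

/-- the basic monomial in `w, z, u`. -/
def mono (a b c : ℕ) : (Fin 3 → ℝ) → ℂ := fun n => wc n ^ a * zc n ^ b * uc n ^ c

lemma hasFDerivAt_mono (a b c : ℕ) (x : Fin 3 → ℝ) :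
    HasFDerivAt (mono a b c)
      ((wc x ^ a * zc x ^ b) • (((c : ℂ) * uc x ^ (c - 1)) • ((2⁻¹ : ℂ) • (cR 0 + Complex.I • cR 1)))
        + (uc x ^ c) •
          ((wc x ^ a) • (((b : ℂ) * zc x ^ (b - 1)) • (cR 2))
            + (zc x ^ b) • (((a : ℂ) * wc x ^ (a - 1)) •
                ((2⁻¹ : ℂ) • (cR 0 - Complex.I • cR 1))))) x :=
  ((hasFDerivAt_npow (hasFDerivAt_wc x) a).mul
    (hasFDerivAt_npow (hasFDerivAt_zc x) b)).mul (hasFDerivAt_npow (hasFDerivAt_uc x) c)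

lemma mono_diff (a b c : ℕ) (x : Fin 3 → ℝ) : DifferentiableAt ℝ (mono a b c) x :=
  (hasFDerivAt_mono a b c x).differentiableAt

lemma pd_mono (i : Fin 3) (a b c : ℕ) (x : Fin 3 → ℝ) :
    pd i (mono a b c) x =
      (wc x ^ a * zc x ^ b) * ((c : ℂ) * uc x ^ (c - 1)) * (2⁻¹ : ℂ)
          * (((Pi.single i 1 : Fin 3 → ℝ) 0 : ℂ) + Complex.I * ((Pi.single i 1 : Fin 3 → ℝ) 1 : ℂ))
        + (uc x ^ c) * ((wc x ^ a) * ((b : ℂ) * zc x ^ (b - 1))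
            * ((Pi.single i 1 : Fin 3 → ℝ) 2 : ℂ)
          + (zc x ^ b) * ((a : ℂ) * wc x ^ (a - 1)) * (2⁻¹ : ℂ)
            * (((Pi.single i 1 : Fin 3 → ℝ) 0 : ℂ)
                - Complex.I * ((Pi.single i 1 : Fin 3 → ℝ) 1 : ℂ))) := by
  have h := hasFDerivAt_mono a b c x
  simp only [pd, h.fderiv]
  simp only [ContinuousLinearMap.add_apply, ContinuousLinearMap.smul_apply,
    ContinuousLinearMap.sub_apply, cR_apply, smul_eq_mul]
  ring

lemma pd2_mono (a b c : ℕ) (x : Fin 3 → ℝ) :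
    pd 2 (mono a b c) x = (b : ℂ) * wc x ^ a * zc x ^ (b - 1) * uc x ^ c := by
  rw [pd_mono]
  norm_num [Pi.single_apply, Fin.ext_iff]
  ring

lemma pdc_mono (a b c : ℕ) (x : Fin 3 → ℝ) :
    pd 0 (mono a b c) x + Complex.I * pd 1 (mono a b c) x
      = (a : ℂ) * wc x ^ (a - 1) * zc x ^ b * uc x ^ c := by
  rw [pd_mono, pd_mono]
  norm_num [Pi.single_apply, Fin.ext_iff]
  linear_combination ((c : ℂ) * uc x ^ (c - 1) * wc x ^ a * zc x ^ b / 2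
    - (a : ℂ) * wc x ^ (a - 1) * zc x ^ b * uc x ^ c / 2) * Complex.I_sq

lemma Lp_mono (a b c : ℕ) (x : Fin 3 → ℝ) :
    Lp (mono a b c) x
      = 2 * (b : ℂ) * mono a (b - 1) (c + 1) x - (a : ℂ) * mono (a - 1) (b + 1) c x := by
  have h2u : ((x 0 : ℂ) + Complex.I * (x 1 : ℂ)) = 2 * uc x := by rw [uc]; ring
  have hz : ((x 2 : ℂ)) = zc x := rfl
  simp only [Lp, pd2_mono, pdc_mono, h2u, hz, mono, pow_succ]
  ring

lemma pd_sum (i : Fin 3) {ι : Type*} (s : Finset ι) (F : ι → (Fin 3 → ℝ) → ℂ) (x : Fin 3 → ℝ)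
    (h : ∀ j ∈ s, DifferentiableAt ℝ (F j) x) :
    pd i (fun n => ∑ j ∈ s, F j n) x = ∑ j ∈ s, pd i (F j) x := by
  simp only [pd, fderiv_fun_sum h, ContinuousLinearMap.coe_sum', Finset.sum_apply]

lemma pd_const_mul (i : Fin 3) (c : ℂ) (f : (Fin 3 → ℝ) → ℂ) (x : Fin 3 → ℝ)
    (h : DifferentiableAt ℝ f x) :
    pd i (fun n => c * f n) x = c * pd i f x := by
  simp only [pd, fderiv_const_mul h c, ContinuousLinearMap.smul_apply, smul_eq_mul]

/-- coefficients of `L₊^k f_ℓ` in the monomial basis. -/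
def cc (ℓ k j : ℕ) : ℂ :=
  if j ≤ k ∧ k ≤ 2 * j then
    (-1) ^ j * (k.factorial : ℂ) * (ℓ.choose j : ℂ) * (j.choose (k - j) : ℂ) else 0

lemma cc_eq_of_le {k j : ℕ} (ℓ : ℕ) (h : j ≤ k) :
    cc ℓ k j = (-1) ^ j * (k.factorial : ℂ) * (ℓ.choose j : ℂ) * (j.choose (k - j) : ℂ) := by
  rw [cc]
  split_ifs with hc
  · rfl
  · rw [Nat.choose_eq_zero_of_lt (by omega : j < k - j)]
    simp

lemma cc_eq_zero_of_lt {k j : ℕ} (ℓ : ℕ) (h : k < j) : cc ℓ k j = 0 := if_neg (by omega)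

/-- `L₊^k f_ℓ` as an explicit sum of monomials. -/
def G (ℓ k : ℕ) : (Fin 3 → ℝ) → ℂ := fun n =>
  ∑ j ∈ Finset.range (ℓ + 1), cc ℓ k j * mono (ℓ - j) (2 * j - k) (k - j) n

lemma Lp_G (ℓ k : ℕ) (x : Fin 3 → ℝ) :
    Lp (G ℓ k) x
      = ∑ j ∈ Finset.range (ℓ + 1), cc ℓ k j * Lp (mono (ℓ - j) (2 * j - k) (k - j)) x := by
  have e : ∀ i : Fin 3, pd i (G ℓ k) x
      = ∑ j ∈ Finset.range (ℓ + 1), cc ℓ k j * pd i (mono (ℓ - j) (2 * j - k) (k - j)) x := by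
    intro i
    rw [show pd i (G ℓ k) x = pd i (fun n => ∑ j ∈ Finset.range (ℓ + 1),
        cc ℓ k j * mono (ℓ - j) (2 * j - k) (k - j) n) x from rfl,
      pd_sum i _ _ x (fun j _ => (mono_diff _ _ _ x).const_mul _)]
    exact Finset.sum_congr rfl fun j _ => pd_const_mul i _ _ x (mono_diff _ _ _ x)
  simp only [Lp, e, Finset.mul_sum, ← Finset.sum_add_distrib, ← Finset.sum_sub_distrib]
  exact Finset.sum_congr rfl fun j _ => by ring

/-- the fundamental recurrence for binomial coefficients used in the induction step. -/
lemma key (J m : ℕ) (hm : m < J) :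
    (J + m + 1) * J.choose (m + 1) = 2 * (J - m) * J.choose m + J * (J - 1).choose (m + 1) := by
  obtain ⟨J', rfl⟩ : ∃ J', J = J' + 1 := ⟨J - 1, by omega⟩
  have hA := Nat.choose_succ_right_eq (J' + 1) m
  have hB := Nat.add_one_mul_choose_eq J' m
  have hC := Nat.choose_succ_succ J' m
  simp only [Nat.add_sub_cancel]
  zify [show m ≤ J' + 1 by omega] at hA ⊢
  zify at hB hC
  linear_combination 2 * hA + (J' + 1 : ℤ) * hC + hB

lemma key2 (ℓ j m : ℕ) (hm : m ≤ j) (hj : j < ℓ) :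
    (j + 1 + m + 1) * ((j + 1).choose (m + 1)) * (ℓ.choose (j + 1)) =
      2 * ((j + 1) - m) * ((j + 1).choose m) * (ℓ.choose (j + 1))
        + (ℓ - j) * (ℓ.choose j) * (j.choose (m + 1)) := by
  have h1 := key (j + 1) m (by omega)
  have hD := Nat.choose_succ_right_eq ℓ j
  simp only [Nat.add_sub_cancel] at h1
  zify [show m ≤ j + 1 by omega, show j ≤ ℓ by omega] at h1 hD ⊢
  linear_combination (ℓ.choose (j + 1) : ℤ) * h1 + (j.choose (m + 1) : ℤ) * hD

lemma step_term (ℓ k j : ℕ) (hj : j < ℓ) (x : Fin 3 → ℝ) :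
    cc ℓ k (j+1) * (2 * ((2*(j+1) - k : ℕ) : ℂ)
        * mono (ℓ - (j+1)) (2*(j+1) - k - 1) (k - (j+1) + 1) x)
      - cc ℓ k j * (((ℓ - j : ℕ) : ℂ) * mono (ℓ - j - 1) (2*j - k + 1) (k - j) x)
      = cc ℓ (k+1) (j+1) * mono (ℓ - (j+1)) (2*(j+1) - (k+1)) ((k+1) - (j+1)) x := by
  rcases lt_trichotomy k j with h | h | h
  · rw [cc_eq_zero_of_lt ℓ h, cc_eq_zero_of_lt ℓ (by omega : k < j + 1),
      cc_eq_zero_of_lt ℓ (by omega : k + 1 < j + 1)]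
    ring
  · subst h
    rw [cc_eq_zero_of_lt ℓ (by omega : k < k + 1)]
    rw [cc_eq_of_le ℓ (le_refl k), cc_eq_of_le ℓ (le_refl (k+1))]
    rw [show ℓ - k - 1 = ℓ - (k+1) from by omega,
      show 2*k - k + 1 = 2*(k+1) - (k+1) from by omega,
      show k - k = 0 from by omega,
      show (k+1) - (k+1) = 0 from by omega]
    simp only [Nat.choose_zero_right, Nat.cast_one]
    have hD := Nat.choose_succ_right_eq ℓ k
    have hkl : k ≤ ℓ := by omega
    have hD' : ((ℓ.choose (k+1) : ℂ)) * ((k : ℂ) + 1)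
        = (ℓ.choose k : ℂ) * ((ℓ : ℂ) - (k : ℂ)) := by
      have := congrArg (Nat.cast : ℕ → ℂ) hD
      push_cast [Nat.cast_sub hkl] at this
      linear_combination this
    rw [pow_succ, Nat.factorial_succ]
    push_cast [Nat.cast_sub hkl]
    linear_combination ((-1 : ℂ) ^ k * (k.factorial : ℂ)
      * mono (ℓ - (k+1)) (2*(k+1) - (k+1)) 0 x) * hD'
  · by_cases h4 : k ≤ 2*j + 1
    · obtain ⟨m, rfl⟩ : ∃ m, k = j + 1 + m := ⟨k - (j+1), by omega⟩
      have hm : m ≤ j := by omega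
      rw [cc_eq_of_le ℓ (by omega : j + 1 ≤ j + 1 + m),
        cc_eq_of_le ℓ (by omega : j ≤ j + 1 + m),
        cc_eq_of_le ℓ (by omega : j + 1 ≤ j + 1 + m + 1)]
      rw [show j + 1 + m - (j + 1) = m from by omega,
        show j + 1 + m - j = m + 1 from by omega,
        show j + 1 + m + 1 - (j + 1) = m + 1 from by omega,
        show 2*(j+1) - (j+1+m) - 1 = j - m from by omega,
        show ℓ - j - 1 = ℓ - (j + 1) from by omega,
        show 2*(j+1) - (j+1+m+1) = j - m from by omega]
      rcases Nat.lt_or_ge m j with hmj | hmj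
      · rw [show 2*j - (j+1+m) + 1 = j - m from by omega,
          show 2*(j+1) - (j+1+m) = j + 1 - m from by omega]
        have hK := key2 ℓ j m hm hj
        have hK' : ((j : ℂ) + 1 + m + 1) * ((j+1).choose (m+1) : ℂ) * (ℓ.choose (j+1) : ℂ)
            = 2 * ((j : ℂ) + 1 - m) * ((j+1).choose m : ℂ) * (ℓ.choose (j+1) : ℂ)
              + ((ℓ : ℂ) - j) * (ℓ.choose j : ℂ) * (j.choose (m+1) : ℂ) := by
          have := congrArg (Nat.cast : ℕ → ℂ) hK
          push_cast [Nat.cast_sub (show m ≤ j + 1 by omega),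
            Nat.cast_sub (show j ≤ ℓ by omega)] at this
          linear_combination this
        rw [Nat.factorial_succ (j+1+m)]
        push_cast [Nat.cast_sub (show m ≤ j + 1 by omega),
          Nat.cast_sub (show j ≤ ℓ by omega)]
        linear_combination (-((-1 : ℂ) ^ (j+1) * ((j+1+m).factorial : ℂ)
          * mono (ℓ - (j+1)) (j - m) (m+1) x)) * hK'
      · have hmj' : m = j := by omega
        subst hmj'
        rw [Nat.choose_succ_self]
        rw [show 2*(m+1) - (m+1+m) = 1 from by omega]
        rw [Nat.factorial_succ (m+1+m)]
        simp only [Nat.choose_succ_self_right, Nat.choose_self, Nat.cast_zero, Nat.cast_one]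
        push_cast
        ring
    · rw [show 2*(j+1) - k = 0 from by omega]
      have hb : cc ℓ k j = 0 := if_neg (by omega)
      have ht : cc ℓ (k+1) (j+1) = 0 := if_neg (by omega)
      rw [hb, ht]
      simp

lemma sum_shift (N : ℕ) (a b t : ℕ → ℂ)
    (hlast : b N = 0) (h0 : a 0 = t 0)
    (hstep : ∀ j < N, a (j+1) - b j = t (j+1)) :
    (∑ j ∈ Finset.range (N+1), a j) - (∑ j ∈ Finset.range (N+1), b j)
      = ∑ j ∈ Finset.range (N+1), t j := by
  rw [Finset.sum_range_succ' a, Finset.sum_range_succ b, Finset.sum_range_succ' t, hlast, h0,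
    add_zero]
  have h : ∑ j ∈ Finset.range N, a (j+1) - ∑ j ∈ Finset.range N, b j
      = ∑ j ∈ Finset.range N, t (j+1) := by
    rw [← Finset.sum_sub_distrib]
    exact Finset.sum_congr rfl fun j hj => hstep j (Finset.mem_range.mp hj)
  linear_combination h

lemma step (ℓ k : ℕ) : Lp (G ℓ k) = G ℓ (k + 1) := by
  funext x
  rw [Lp_G]
  simp only [Lp_mono, mul_sub, G]
  rw [Finset.sum_sub_distrib]
  refine sum_shift ℓ _ _ _ ?_ ?_ ?_
  · simp [Nat.sub_self]
  · have h0 : cc ℓ (k+1) 0 = 0 := if_neg (by omega)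
    rw [show 2*0 - k = 0 from by omega, h0]
    simp
  · intro j hj
    exact step_term ℓ k j hj x

lemma G_zero (ℓ : ℕ) : G ℓ 0 = fl ℓ := by
  funext x
  simp only [G]
  rw [Finset.sum_eq_single 0]
  · simp [cc, mono, wc, fl]
  · intro j hj hne
    rw [cc_eq_zero_of_lt ℓ (by omega)]
    ring
  · intro h
    simp at h
  
lemma iterate_G (ℓ k : ℕ) : Lp^[k] (fl ℓ) = G ℓ k := by
  induction k with
  | zero => simpa using (G_zero ℓ).symm
  | succ k ih => rw [Function.iterate_succ_apply', ih, step]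

lemma G_vanish (ℓ k : ℕ) (hk : 2*ℓ < k) (x : Fin 3 → ℝ) : G ℓ k x = 0 := by
  simp only [G]
  refine Finset.sum_eq_zero fun j hj => ?_
  simp only [Finset.mem_range] at hj
  have : cc ℓ k j = 0 := if_neg (by omega)
  rw [this, zero_mul]

lemma sum_eval (ℓ : ℕ) (ζ : ℂ) (hζ : ζ ≠ 0) (x : Fin 3 → ℝ) :
    ∑ k ∈ Finset.range (2*ℓ + 1), (1 / ((k.factorial : ℂ) * ζ ^ k)) * G ℓ k x
      = (wc x - zc x / ζ - uc x / ζ ^ 2) ^ ℓ := by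
  have hrhs : (wc x - zc x / ζ - uc x / ζ ^ 2) ^ ℓ
      = ∑ j ∈ Finset.range (ℓ + 1),
          (-(zc x / ζ + uc x / ζ ^ 2)) ^ j * wc x ^ (ℓ - j) * (ℓ.choose j : ℂ) := by
    rw [show wc x - zc x / ζ - uc x / ζ ^ 2
        = (-(zc x / ζ + uc x / ζ ^ 2)) + wc x from by ring, add_pow]
  rw [hrhs]
  simp only [G, Finset.mul_sum]
  rw [Finset.sum_comm]
  refine Finset.sum_congr rfl fun j hj => ?_
  have hjl : j ≤ ℓ := by simpa [Nat.lt_succ_iff] using hj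
  have hsub : Finset.Ico j (2*j+1) ⊆ Finset.range (2*ℓ+1) := by
    intro k hk
    simp only [Finset.mem_Ico] at hk
    simp only [Finset.mem_range]
    omega
  have hzero : ∀ k ∈ Finset.range (2*ℓ+1), k ∉ Finset.Ico j (2*j+1) →
      (1 / ((k.factorial : ℂ) * ζ ^ k)) * (cc ℓ k j * mono (ℓ - j) (2*j - k) (k - j) x) = 0 := by
    intro k _ hk
    simp only [Finset.mem_Ico, not_and_or, not_le, not_lt] at hk
    have : cc ℓ k j = 0 := if_neg (by omega)
    rw [this]
    ring
  rw [← Finset.sum_subset hsub hzero]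
  rw [Finset.sum_Ico_eq_sum_range]
  rw [show 2*j + 1 - j = j + 1 from by omega]
  rw [show (-(zc x / ζ + uc x / ζ ^ 2)) ^ j
      = (-1 : ℂ) ^ j * ∑ m ∈ Finset.range (j+1),
          (uc x / ζ ^ 2) ^ m * (zc x / ζ) ^ (j - m) * (j.choose m : ℂ) from by
    rw [neg_pow, show zc x / ζ + uc x / ζ ^ 2 = uc x / ζ ^ 2 + zc x / ζ from by ring, add_pow]]
  simp only [Finset.sum_mul, Finset.mul_sum]
  refine Finset.sum_congr rfl fun m hm => ?_
  have hmj : m ≤ j := by simpa [Nat.lt_succ_iff] using hm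
  rw [cc_eq_of_le ℓ (by omega : j ≤ j + m)]
  rw [show j + m - j = m from by omega, show 2*j - (j + m) = j - m from by omega]
  obtain ⟨d, rfl⟩ : ∃ d, j = m + d := ⟨j - m, by omega⟩
  rw [show m + d - m = d from by omega]
  have hF : (((m + d + m).factorial : ℂ)) ≠ 0 := Nat.cast_ne_zero.mpr (Nat.factorial_ne_zero _)
  simp only [mono]
  field_simp
  have key : ζ ^ (m + d + m) * (uc x / ζ ^ 2) ^ m * (zc x / ζ) ^ d = uc x ^ m * zc x ^ d := by
    rw [div_pow, div_pow, ← pow_mul]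
    field_simp
    ring
  linear_combination (-(ℓ.choose (m + d) : ℂ) * ((m + d).choose m : ℂ) * wc x ^ (ℓ - (m + d))) * key

end AuxLp

end AuxLp

open AuxLp in
/-- For every unit vector `n ∈ S²` and `ζ ≠ 0`,
`(−n(ζ)/ζ²)^ℓ = Σ_{k=0}^{2ℓ} (1/(k! ζ^k)) (L₊^k f_ℓ)(n)`, and `L₊^k f_ℓ` vanishes on `S²`
for `k > 2ℓ`. -/
theorem exp_Lp_expansion_of_n_zeta_pow (ℓ : ℕ) (n : Fin 3 → ℝ)
    (hn : n 0 ^ 2 + n 1 ^ 2 + n 2 ^ 2 = 1) :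
    (∀ ζ : ℂ, ζ ≠ 0 →
      (-(xz ζ n) / ζ ^ 2) ^ ℓ =
        ∑ k ∈ Finset.range (2 * ℓ + 1),
          (1 / ((k.factorial : ℂ) * ζ ^ k)) * (Lp^[k] (fl ℓ)) n) ∧
    (∀ k : ℕ, 2 * ℓ < k → (Lp^[k] (fl ℓ)) n = 0) := by
  constructor
  · intro ζ hζ
    have hx : -(xz ζ n) / ζ ^ 2 = wc n - zc n / ζ - uc n / ζ ^ 2 := by
      rw [xz, wc, zc, uc]
      field_simp
      ring
    rw [hx, ← sum_eval ℓ ζ hζ n]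
    refine Finset.sum_congr rfl fun k hk => ?_
    rw [iterate_G]
  · intro k hk
    rw [iterate_G]
    exact G_vanish ℓ k hk n
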